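/- The range of the function y(θ₁,θ₂) = 2 + 2cos(2πθ₁) + 2cos(2πθ₂) + 2cos(2π(θ₁−θ₂)) + 2cos(2π(θ₁+θ₂)) + 2cos(2π(2θ₁−θ₂)) + 2cos(2π(θ₁−2θ₂)) over all real (θ₁,θ₂) is the closed interval [−2, 14]. -/

import Mathlib

open Real

private lemma key_id (a b : ℝ) :
    2 + 2 * cos a + 2 * cos b + 2 * cos (a - b) + 2 * cos (a + b)
      + 2 * cos (a + (a - b)) + 2 * cos ((a - b) - b)
    = 2 + 4 * (cos a * cos b + cos b * cos (a - b) + cos (a - b) * cos a) := by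
  rw [cos_add a b, cos_add a (a-b), cos_sub (a-b) b, cos_sub a b, sin_sub a b]
  have h1 := sin_sq_add_cos_sq a
  have h2 := sin_sq_add_cos_sq b
  linear_combination (-2*cos b)*h1 + (-2*cos a)*h2

private lemma cube_min {x y z : ℝ} (hx1 : -1 ≤ x) (hx2 : x ≤ 1) (hy1 : -1 ≤ y)
    (hy2 : y ≤ 1) (hz1 : -1 ≤ z) (hz2 : z ≤ 1) : -1 ≤ x*y + y*z + z*x := by
  nlinarith [mul_nonneg (mul_nonneg (by linarith : (0:ℝ) ≤ 1+x) (by linarith : (0:ℝ) ≤ 1+y)) (by linarith : (0:ℝ) ≤ 1+z),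
    mul_nonneg (mul_nonneg (by linarith : (0:ℝ) ≤ 1-x) (by linarith : (0:ℝ) ≤ 1-y)) (by linarith : (0:ℝ) ≤ 1-z)]

theorem G2_chi2_range :
    Set.range (fun p : ℝ × ℝ =>
        2 + 2 * cos (2 * π * p.1) + 2 * cos (2 * π * p.2) + 2 * cos (2 * π * (p.1 - p.2))
          + 2 * cos (2 * π * (p.1 + p.2)) + 2 * cos (2 * π * (2 * p.1 - p.2))
          + 2 * cos (2 * π * (p.1 - 2 * p.2)))
      = Set.Icc (-2 : ℝ) 14 := by
  apply Set.Subset.antisymm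
  · rintro _ ⟨⟨t1, t2⟩, rfl⟩
    simp only
    set a := 2 * π * t1 with ha
    set b := 2 * π * t2 with hb
    have e1 : 2 * π * (t1 - t2) = a - b := by rw [ha, hb]; ring
    have e2 : 2 * π * (t1 + t2) = a + b := by rw [ha, hb]; ring
    have e3 : 2 * π * (2 * t1 - t2) = a + (a - b) := by rw [ha, hb]; ring
    have e4 : 2 * π * (t1 - 2 * t2) = (a - b) - b := by rw [ha, hb]; ring
    rw [e1, e2, e3, e4, key_id a b]
    constructor
    · have := cube_min (neg_one_le_cos a) (cos_le_one a) (neg_one_le_cos b)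
        (cos_le_one b) (neg_one_le_cos (a - b)) (cos_le_one (a - b))
      linarith
    · nlinarith [neg_one_le_cos a, cos_le_one a, neg_one_le_cos b, cos_le_one b,
        neg_one_le_cos (a - b), cos_le_one (a - b)]
  · rintro v ⟨hv1, hv2⟩
    set c : ℝ := Real.sqrt ((v + 2) / 4) - 1 with hc
    have hsq : Real.sqrt ((v + 2) / 4) ^ 2 = (v + 2) / 4 := by
      rw [Real.sq_sqrt]; linarith
    have hs0 : 0 ≤ Real.sqrt ((v + 2) / 4) := Real.sqrt_nonneg _
    have hs2 : Real.sqrt ((v + 2) / 4) ≤ 2 := by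
      nlinarith [hsq, hs0]
    have hc1 : -1 ≤ c := by rw [hc]; linarith
    have hc2 : c ≤ 1 := by rw [hc]; linarith
    set t : ℝ := Real.arccos c / (2 * π)
    have hπ : (2 * π) ≠ 0 := by positivity
    have hcos : cos (2 * π * t) = c := by
      rw [show 2 * π * t = Real.arccos c from by simp only [t]; field_simp]
      exact Real.cos_arccos hc1 hc2
    refine ⟨(t, t), ?_⟩
    simp only
    have e1 : 2 * π * (t - t) = 0 := by ring
    have e2 : 2 * π * (t + t) = 2 * (2 * π * t) := by ring
    have e3 : 2 * π * (2 * t - t) = 2 * π * t := by ring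
    have e4 : 2 * π * (t - 2 * t) = -(2 * π * t) := by ring
    rw [e1, e2, e3, e4, cos_neg, cos_two_mul, hcos, cos_zero]
    rw [hc]; linear_combination 4*hsq
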